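/- Let r : ℝ → ℝ be bounded, continuously differentiable, strictly increasing, with s·r(s) ≥ 0 for all s, let κ > 0, let c₀ ≥ 0, and let c : [0,∞) → ℝ be the solution of κ·c'' = r(c), c(0) = c₀, c'(0) = 0. If w : [0,∞) → ℝ is twice continuously differentiable and satisfies κ·w''(z) = r'(c(z))·w(z) for all z ≥ 0 with w(0) = 1 and w'(0) = 0, then w(z) ≥ 1 and w'(z) ≥ 0 for all z ≥ 0. -/

import Mathlib

open Set MeasureTheory intervalIntegral Filter
open Topology

/-- `c` (with derivative `c'` and second derivative `c''`) solves the initial value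
problem `κ·c'' = r(c)` on `[0,∞)` with `c(0) = c₀`, `c'(0) = 0`. -/
def SolvesIVP (κ : ℝ) (r : ℝ → ℝ) (c₀ : ℝ) (c c' c'' : ℝ → ℝ) : Prop :=
  (∀ z ∈ Ici (0:ℝ), HasDerivWithinAt c (c' z) (Ici (0:ℝ)) z) ∧
  (∀ z ∈ Ici (0:ℝ), HasDerivWithinAt c' (c'' z) (Ici (0:ℝ)) z) ∧
  ContinuousOn c'' (Ici (0:ℝ)) ∧
  (∀ z ∈ Ici (0:ℝ), κ * c'' z = r (c z)) ∧
  c 0 = c₀ ∧ c' 0 = 0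

theorem linearized_IVP_lower_bounds
    (κ : ℝ) (hκ : 0 < κ)
    (r : ℝ → ℝ) (hrb : ∃ B : ℝ, ∀ s : ℝ, |r s| ≤ B)
    (hr : ContDiff ℝ 1 r) (hrmono : StrictMono r)
    (hrsign : ∀ s : ℝ, 0 ≤ s * r s)
    (c₀ : ℝ) (hc₀ : 0 ≤ c₀)
    (c c' c'' : ℝ → ℝ) (hc : SolvesIVP κ r c₀ c c' c'')
    (w w' w'' : ℝ → ℝ)
    (hw1 : ∀ z ∈ Ici (0:ℝ), HasDerivWithinAt w (w' z) (Ici (0:ℝ)) z)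
    (hw2 : ∀ z ∈ Ici (0:ℝ), HasDerivWithinAt w' (w'' z) (Ici (0:ℝ)) z)
    (hw2c : ContinuousOn w'' (Ici (0:ℝ)))
    (hwode : ∀ z ∈ Ici (0:ℝ), κ * w'' z = deriv r (c z) * w z)
    (hw0 : w 0 = 1) (hw0' : w' 0 = 0) :
    ∀ z ∈ Ici (0:ℝ), 1 ≤ w z ∧ 0 ≤ w' z := by
  have hwcont : ContinuousOn w (Ici (0:ℝ)) := fun z hz => (hw1 z hz).continuousWithinAt
  have hw'cont : ContinuousOn w' (Ici (0:ℝ)) := fun z hz => (hw2 z hz).continuousWithinAt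
  -- derivative of a monotone differentiable function is nonnegative
  have hq : ∀ x : ℝ, 0 ≤ deriv r x := by
    intro x
    have hd : HasDerivAt r (deriv r x) x := ((hr.differentiable one_ne_zero) x).hasDerivAt
    have hle : 𝓝[>] x ≤ 𝓝[≠] x := by
      apply nhdsWithin_mono
      intro y hy
      exact (ne_of_gt hy : y ≠ x)
    have ht : Tendsto (slope r x) (𝓝[>] x) (𝓝 (deriv r x)) :=
      (hasDerivAt_iff_tendsto_slope.mp hd).mono_left hle
    refine ge_of_tendsto ht ?_
    filter_upwards [self_mem_nhdsWithin] with y hy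
    rw [slope_def_field]
    have hxy : x < y := hy
    exact div_nonneg (sub_nonneg.mpr (hrmono.monotone hxy.le)) (sub_nonneg.mpr hxy.le)
  -- key lemma: nonnegativity of w on [0,T] upgrades to w ≥ 1 and w' ≥ 0 on [0,T]
  have key : ∀ T : ℝ, 0 ≤ T → (∀ t ∈ Icc (0:ℝ) T, 0 ≤ w t) →
      ∀ t ∈ Icc (0:ℝ) T, 1 ≤ w t ∧ 0 ≤ w' t := by
    intro T hT hpos
    have hderiv' : ∀ z ∈ interior (Icc (0:ℝ) T), HasDerivAt w' (w'' z) z := by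
      intro z hz
      rw [interior_Icc] at hz
      exact (hw2 z hz.1.le).hasDerivAt (Ici_mem_nhds hz.1)
    have hderivw : ∀ z ∈ interior (Icc (0:ℝ) T), HasDerivAt w (w' z) z := by
      intro z hz
      rw [interior_Icc] at hz
      exact (hw1 z hz.1.le).hasDerivAt (Ici_mem_nhds hz.1)
    have hw''nonneg : ∀ z ∈ Icc (0:ℝ) T, 0 ≤ w'' z := by
      intro z hz
      have h1 := hwode z hz.1
      have h2 : 0 ≤ deriv r (c z) * w z := mul_nonneg (hq _) (hpos z hz)
      nlinarith
    have hmono' : MonotoneOn w' (Icc (0:ℝ) T) := by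
      refine monotoneOn_of_deriv_nonneg (convex_Icc 0 T)
        (hw'cont.mono Icc_subset_Ici_self) ?_ ?_
      · intro z hz
        exact (hderiv' z hz).differentiableAt.differentiableWithinAt
      · intro z hz
        rw [(hderiv' z hz).deriv]
        exact hw''nonneg z (interior_subset hz)
    have hw'nonneg : ∀ t ∈ Icc (0:ℝ) T, 0 ≤ w' t := by
      intro t ht
      have := hmono' (left_mem_Icc.mpr hT) ht ht.1
      rwa [hw0'] at this
    have hmono : MonotoneOn w (Icc (0:ℝ) T) := by
      refine monotoneOn_of_deriv_nonneg (convex_Icc 0 T)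
        (hwcont.mono Icc_subset_Ici_self) ?_ ?_
      · intro z hz
        exact (hderivw z hz).differentiableAt.differentiableWithinAt
      · intro z hz
        rw [(hderivw z hz).deriv]
        exact hw'nonneg z (interior_subset hz)
    intro t ht
    refine ⟨?_, hw'nonneg t ht⟩
    have := hmono (left_mem_Icc.mpr hT) ht ht.1
    rwa [hw0] at this
  -- positivity of w on [0,∞)
  have hpos : ∀ z ∈ Ici (0:ℝ), 0 < w z := by
    by_contra h
    push_neg at h
    obtain ⟨z₀, hz₀, hz₀'⟩ := h
    set S : Set ℝ := {z | z ∈ Ici (0:ℝ) ∧ w z ≤ 0} with hSdef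
    have hSne : S.Nonempty := ⟨z₀, hz₀, hz₀'⟩
    have hSclosed : IsClosed S := by
      have : S = Ici (0:ℝ) ∩ w ⁻¹' (Iic 0) := by
        ext x; simp [hSdef, Set.mem_setOf_eq, Set.mem_preimage]
      rw [this]
      exact hwcont.preimage_isClosed_of_isClosed isClosed_Ici isClosed_Iic
    have hSbdd : BddBelow S := ⟨0, fun x hx => hx.1⟩
    set T := sInf S with hTdef
    have hTS : T ∈ S := hSclosed.csInf_mem hSne hSbdd
    have hT0 : 0 < T := by
      rcases (show (0:ℝ) ≤ T from hTS.1).lt_or_eq with h | h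
      · exact h
      · exfalso
        have := hTS.2
        rw [← h, hw0] at this
        linarith
    have hlt : ∀ t ∈ Ico (0:ℝ) T, 1 ≤ w t := by
      intro t ht
      have hp : ∀ s ∈ Icc (0:ℝ) t, 0 ≤ w s := by
        intro s hs
        have hsT : s < T := lt_of_le_of_lt hs.2 ht.2
        have hns : s ∉ S := fun hmem => absurd (csInf_le hSbdd hmem) (not_le.mpr hsT)
        by_contra hneg
        exact hns ⟨hs.1, le_of_not_ge fun h' => hneg (by linarith)⟩
      exact ((key t ht.1 hp) t ⟨ht.1, le_refl t⟩).1
    -- take the limit t → T⁻ to get 1 ≤ w T, contradicting w T ≤ 0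
    have hne : (𝓝[Ico (0:ℝ) T] T).NeBot := by
      have h1 : (𝓝[Ioo (0:ℝ) T] T).NeBot := right_nhdsWithin_Ioo_neBot hT0
      exact h1.mono (nhdsWithin_mono T Ioo_subset_Ico_self)
    have htend : Tendsto w (𝓝[Ico (0:ℝ) T] T) (𝓝 (w T)) :=
      (hwcont T hTS.1).mono Ico_subset_Ici_self
    have h1T : 1 ≤ w T := by
      refine ge_of_tendsto htend ?_
      filter_upwards [self_mem_nhdsWithin] with t ht
      exact hlt t ht
    linarith [hTS.2]
  intro z hz
  exact key z hz (fun t ht => (hpos t ht.1).le) z ⟨hz, le_refl z⟩
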